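/- Let ν, r, γ be real numbers with ν > 0 and γ ∈ ℝ. Let σ := !![0, 1; -1, 0], Γ := diag(ν·exp(2r), ν·exp(−2r)), K := −γ·I + 2γ·Γ⁻¹, M^Bayes := 2γ·I + i·(K·σ + σ·Kᵀ) as a 2×2 complex matrix, and u := (1/√2)·(1, i)ᵀ ∈ ℂ². Then the quadratic form satisfies u† · M^Bayes · u = 4γ·(1 − cosh(2r)/ν). -/

import Mathlib

open Matrix Complex

/-- The one-mode symplectic form in HHW conventions, as a complex matrix. -/
noncomputable def symp : Matrix (Fin 2) (Fin 2) ℂ := !![0, 1; -1, 0]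

/-- Squeezed-thermal reference covariance `diag(ν e^{2r}, ν e^{-2r})`, as a complex matrix. -/
noncomputable def Gam (ν r : ℝ) : Matrix (Fin 2) (Fin 2) ℂ :=
  Matrix.diagonal ![((ν * Real.exp (2 * r) : ℝ) : ℂ), ((ν * Real.exp (-(2 * r)) : ℝ) : ℂ)]

/-- Bayes reverse drift `K = -γ I + 2γ Γ⁻¹`. -/
noncomputable def Kbayes (ν r γ : ℝ) : Matrix (Fin 2) (Fin 2) ℂ :=
  (-(γ : ℂ)) • (1 : Matrix (Fin 2) (Fin 2) ℂ) + ((2 * γ : ℝ) : ℂ) • (Gam ν r)⁻¹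

/-- Generator CP matrix `M^Bayes = 2γ I + i (K σ + σ Kᵀ)`. -/
noncomputable def MBayes (ν r γ : ℝ) : Matrix (Fin 2) (Fin 2) ℂ :=
  ((2 * γ : ℝ) : ℂ) • (1 : Matrix (Fin 2) (Fin 2) ℂ) +
    Complex.I • (Kbayes ν r γ * symp + symp * (Kbayes ν r γ)ᵀ)

/-- The vector `u = (1/√2)(1, i)ᵀ`. -/
noncomputable def uvec : Fin 2 → ℂ :=
  ![(1 : ℂ) / (Real.sqrt 2 : ℂ), Complex.I / (Real.sqrt 2 : ℂ)]

lemma gam_inv (ν r : ℝ) (hν : 0 < ν) :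
    (Gam ν r)⁻¹ = Matrix.diagonal ![((ν * Real.exp (2 * r) : ℝ) : ℂ)⁻¹, ((ν * Real.exp (-(2 * r)) : ℝ) : ℂ)⁻¹] := by
  apply Matrix.inv_eq_right_inv
  have h1 : ((ν * Real.exp (2 * r) : ℝ) : ℂ) ≠ 0 := by
    exact_mod_cast (mul_pos hν (Real.exp_pos _)).ne'
  have h2 : ((ν * Real.exp (-(2 * r)) : ℝ) : ℂ) ≠ 0 := by
    exact_mod_cast (mul_pos hν (Real.exp_pos _)).ne'
  have hν' : (ν : ℂ) ≠ 0 := by exact_mod_cast hν.ne'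
  rw [Gam, Matrix.diagonal_mul_diagonal]
  ext i j
  fin_cases i <;> fin_cases j <;>
    simp [Matrix.diagonal, Matrix.one_apply] <;> field_simp <;> ring

lemma quad_form_eq (M : Matrix (Fin 2) (Fin 2) ℂ) :
    star uvec ⬝ᵥ M.mulVec uvec
      = (M 0 0 + M 1 1 + Complex.I * M 0 1 - Complex.I * M 1 0) / 2 := by
  have h2 : ((Real.sqrt 2 : ℝ) : ℂ) * ((Real.sqrt 2 : ℝ) : ℂ) = 2 := by
    rw [← Complex.ofReal_mul, Real.mul_self_sqrt (by norm_num)]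
    norm_num
  have hs : ((Real.sqrt 2 : ℝ) : ℂ) ≠ 0 := by
    intro h; rw [h, mul_zero] at h2; norm_num at h2
  simp only [uvec, Matrix.mulVec, dotProduct, Fin.sum_univ_two, Pi.star_apply,
    star_div₀, Matrix.cons_val_zero, Matrix.cons_val_one, Matrix.head_cons,
    Complex.star_def, Complex.conj_I, Complex.conj_ofReal, _root_.map_one]
  simp only [map_inv₀, map_mul, map_div₀, _root_.map_one, Complex.conj_ofReal, Complex.conj_I]
  field_simp
  ring_nf
  simp only [Complex.I_sq]
  linear_combination (-(M 0 0 + M 0 1 * Complex.I - Complex.I * M 1 0 + M 1 1)) * h2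

noncomputable def cval (ν r γ : ℝ) : ℂ :=
  -(2 * (γ:ℂ)) + ((2 * γ : ℝ) : ℂ) *
    (((ν * Real.exp (2 * r) : ℝ) : ℂ)⁻¹ + ((ν * Real.exp (-(2 * r)) : ℝ) : ℂ)⁻¹)

lemma MBayes_entries (ν r γ : ℝ) (hν : 0 < ν) :
    MBayes ν r γ = !![((2 * γ : ℝ) : ℂ), Complex.I * cval ν r γ;
                      -(Complex.I * cval ν r γ), ((2 * γ : ℝ) : ℂ)] := by
  ext i j
  fin_cases i <;> fin_cases j <;>
    simp only [MBayes, Kbayes, gam_inv ν r hν, symp, cval, Matrix.add_apply, Matrix.smul_apply,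
      Matrix.one_apply, Matrix.mul_apply, Matrix.transpose_apply, Matrix.diagonal_apply,
      Fin.sum_univ_two, Matrix.cons_val', Matrix.cons_val_zero, Matrix.cons_val_one,
      Matrix.head_cons, Matrix.empty_val', Matrix.cons_val_fin_one, Matrix.of_apply,
      Matrix.head_fin_const, Fin.ext_iff, smul_eq_mul] <;>
    norm_num <;> ring


/-- Quadratic form of the Bayes CP matrix at `u`:
`u† M^Bayes u = 4γ (1 - cosh(2r)/ν)`. -/
theorem quadratic_form_MBayes (ν r γ : ℝ) (hν : 0 < ν) :
    star uvec ⬝ᵥ (MBayes ν r γ).mulVec uvec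
      = ((4 * γ * (1 - Real.cosh (2 * r) / ν) : ℝ) : ℂ) := by
  rw [MBayes_entries ν r γ hν, quad_form_eq]
  simp only [Matrix.cons_val', Matrix.cons_val_zero, Matrix.cons_val_one, Matrix.head_cons,
    Matrix.empty_val', Matrix.cons_val_fin_one, Matrix.of_apply, Matrix.head_fin_const]
  have hA : (ν * Real.exp (2 * r) : ℝ) ≠ 0 := (mul_pos hν (Real.exp_pos _)).ne'
  have hB : (ν * Real.exp (-(2 * r)) : ℝ) ≠ 0 := (mul_pos hν (Real.exp_pos _)).ne'
  have hc : cval ν r γ = ((-(2 * γ) + 2 * γ * ((ν * Real.exp (2 * r))⁻¹ + (ν * Real.exp (-(2 * r)))⁻¹) : ℝ) : ℂ) := by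
    simp only [cval]
    push_cast
    ring
  rw [hc]
  set x : ℝ := -(2 * γ) + 2 * γ * ((ν * Real.exp (2 * r))⁻¹ + (ν * Real.exp (-(2 * r)))⁻¹) with hx
  have key1 : Complex.I * (Complex.I * (x : ℂ)) = -(x : ℂ) := by
    rw [← mul_assoc, Complex.I_mul_I]; ring
  have key2 : Complex.I * -(Complex.I * (x : ℂ)) = (x : ℂ) := by
    rw [mul_neg, ← mul_assoc, Complex.I_mul_I]; ring
  rw [key1, key2]
  have : (((2 * γ : ℝ) : ℂ) + ((2 * γ : ℝ) : ℂ) + -(x : ℂ) - (x : ℂ)) / 2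
      = (((2 * γ + 2 * γ + -x - x) / 2 : ℝ) : ℂ) := by push_cast; ring
  rw [this]
  norm_cast
  rw [hx, Real.cosh_eq, Real.exp_neg]
  have hE : Real.exp (2 * r) ≠ 0 := (Real.exp_pos _).ne'
  field_simp
  ring
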